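/- Let H1, H2 be real separable Hilbert spaces, u ∈ H1 and v ∈ H2 unit vectors, and H a Hilbert–Schmidt operator from H1 to H2 satisfying Hu = v, H*v = u, and |⟨H u⊥, v⊥⟩| < 1 for all unit vectors u⊥ ⊥ u and v⊥ ⊥ v. Then every trace-class operator G from H1 to H2 satisfying ⟨H, G⟩_{HS} = ‖G‖_* (the nuclear norm of G) is of the form G = σ (u ⊗ v) for some σ ≥ 0. -/

import Mathlib

open scoped RealInnerProductSpace

/-- The rank-one operator `u ⊗ v : a ↦ ⟪u, a⟫ • v`. -/
noncomputable def rankOne {H1 H2 : Type*} [NormedAddCommGroup H1] [InnerProductSpace ℝ H1]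
    [NormedAddCommGroup H2] [InnerProductSpace ℝ H2] (u : H1) (v : H2) : H1 →L[ℝ] H2 :=
  (innerSL ℝ u).smulRight v

lemma arith_le (α β a c t : ℝ) (ha : 0 ≤ a) (hc : 0 ≤ c)
    (hnx : a ^ 2 = 1 - α ^ 2) (hny : c ^ 2 = 1 - β ^ 2) (ht : t ≤ a * c) :
    α * β + t ≤ 1 := by
  nlinarith [sq_nonneg (α - β), sq_nonneg (a - c)]

lemma arith_lt (α β a c t : ℝ) (ha : 0 ≤ a) (hc : 0 ≤ c)
    (hnx : a ^ 2 = 1 - α ^ 2) (hny : c ^ 2 = 1 - β ^ 2) (ht : t < a * c)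
    (heq : α * β + t = 1) : False := by
  nlinarith [sq_nonneg (α - β), sq_nonneg (a - c)]

lemma key_ineq {H1 H2 : Type*} [NormedAddCommGroup H1] [InnerProductSpace ℝ H1] [CompleteSpace H1]
    [NormedAddCommGroup H2] [InnerProductSpace ℝ H2] [CompleteSpace H2]
    (u : H1) (v : H2) (hu : ‖u‖ = 1) (hv : ‖v‖ = 1)
    (H : H1 →L[ℝ] H2)
    (hHu : H u = v) (hHv : ContinuousLinearMap.adjoint H v = u)
    (hperp : ∀ (u' : H1) (v' : H2), ‖u'‖ = 1 → ‖v'‖ = 1 →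
      ⟪u, u'⟫ = 0 → ⟪v, v'⟫ = 0 → |⟪H u', v'⟫| < 1)
    (x : H1) (y : H2) (hx : ‖x‖ = 1) (hy : ‖y‖ = 1) :
    ⟪H x, y⟫ ≤ 1 ∧ (⟪H x, y⟫ = 1 → ∃ ε : ℝ, ε * ε = 1 ∧ x = ε • u ∧ y = ε • v) := by
  set α : ℝ := ⟪u, x⟫ with hα
  set β : ℝ := ⟪v, y⟫ with hβ
  set x' : H1 := x - α • u with hx'
  set y' : H2 := y - β • v with hy'
  have hux' : ⟪u, x'⟫ = 0 := by
    simp [hx', inner_sub_right, inner_smul_right, real_inner_self_eq_norm_sq, hu]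
    linarith [hα]
  have hvy' : ⟪v, y'⟫ = 0 := by
    simp [hy', inner_sub_right, inner_smul_right, real_inner_self_eq_norm_sq, hv]
    linarith [hβ]
  have hnx' : ‖x'‖ ^ 2 = 1 - α ^ 2 := by
    have h1 : ⟪x', x'⟫ = 1 - α ^ 2 := by
      have hxx : ⟪x, x⟫ = 1 := by
        rw [real_inner_self_eq_norm_sq, hx]; norm_num
      have huu : ⟪u, u⟫ = 1 := by
        rw [real_inner_self_eq_norm_sq, hu]; norm_num
      have hxu : (inner ℝ x u : ℝ) = α := by rw [real_inner_comm]
      simp only [hx', inner_sub_left, inner_sub_right, real_inner_smul_left, real_inner_smul_right,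
        hxx, huu, hxu, ← hα]
      ring
    rw [← real_inner_self_eq_norm_sq, h1]
  have hny' : ‖y'‖ ^ 2 = 1 - β ^ 2 := by
    have h1 : ⟪y', y'⟫ = 1 - β ^ 2 := by
      have hyy : ⟪y, y⟫ = 1 := by
        rw [real_inner_self_eq_norm_sq, hy]; norm_num
      have hvv : ⟪v, v⟫ = 1 := by
        rw [real_inner_self_eq_norm_sq, hv]; norm_num
      have hyv : (inner ℝ y v : ℝ) = β := by rw [real_inner_comm]
      simp only [hy', inner_sub_left, inner_sub_right, real_inner_smul_left, real_inner_smul_right,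
        hyy, hvv, hyv, ← hβ]
      ring
    rw [← real_inner_self_eq_norm_sq, h1]
  clear_value α β x' y'
  set t : ℝ := ⟪H x', y'⟫ with ht
  clear_value t
  -- decomposition of the inner product
  have hdecomp : ⟪H x, y⟫ = α * β + t := by
    have hxeq : x = α • u + x' := by simp [hx']
    have hyeq : y = β • v + y' := by simp [hy']
    have hHx'v : ⟪H x', v⟫ = 0 := by
      rw [real_inner_comm, ← ContinuousLinearMap.adjoint_inner_left, hHv, hux']
    calc ⟪H x, y⟫ = ⟪H (α • u + x'), β • v + y'⟫ := by rw [← hxeq, ← hyeq]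
      _ = α * β + t := by
          rw [map_add, map_smul, hHu]
          simp [inner_add_left, inner_add_right, real_inner_smul_left, real_inner_smul_right,
            real_inner_self_eq_norm_sq, hv, hvy', hHx'v]
          rw [← ht]; ring
  -- strict bound on t
  have htstrict : x' ≠ 0 → y' ≠ 0 → |t| < ‖x'‖ * ‖y'‖ := by
    intro h1 h2
    have hn1 : ‖x'‖ ≠ 0 := norm_ne_zero_iff.mpr h1
    have hn2 : ‖y'‖ ≠ 0 := norm_ne_zero_iff.mpr h2
    have := hperp (‖x'‖⁻¹ • x') (‖y'‖⁻¹ • y')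
      (by rw [norm_smul, norm_inv, norm_norm, inv_mul_cancel₀ hn1])
      (by rw [norm_smul, norm_inv, norm_norm, inv_mul_cancel₀ hn2])
      (by rw [real_inner_smul_right, hux', mul_zero])
      (by rw [real_inner_smul_right, hvy', mul_zero])
    rw [map_smul, real_inner_smul_left, real_inner_smul_right, ← ht] at this
    rw [abs_mul, abs_mul, abs_inv, abs_inv, abs_norm, abs_norm] at this
    have hp1 : (0:ℝ) < ‖x'‖ := lt_of_le_of_ne (norm_nonneg _) (Ne.symm hn1)
    have hp2 : (0:ℝ) < ‖y'‖ := lt_of_le_of_ne (norm_nonneg _) (Ne.symm hn2)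
    calc |t| = ‖x'‖ * ‖y'‖ * (‖x'‖⁻¹ * (‖y'‖⁻¹ * |t|)) := by
          field_simp
      _ < ‖x'‖ * ‖y'‖ * 1 := by
          apply mul_lt_mul_of_pos_left _ (by positivity)
          exact this
      _ = ‖x'‖ * ‖y'‖ := mul_one _
  have htle : |t| ≤ ‖x'‖ * ‖y'‖ := by
    by_cases h1 : x' = 0
    · simp [ht, h1]
    · by_cases h2 : y' = 0
      · simp [ht, h2]
      · exact le_of_lt (htstrict h1 h2)
  have ha : (0:ℝ) ≤ ‖x'‖ := norm_nonneg _
  have hb : (0:ℝ) ≤ ‖y'‖ := norm_nonneg _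
  have habs : t ≤ ‖x'‖ * ‖y'‖ := le_trans (le_abs_self t) htle
  constructor
  · rw [hdecomp]
    exact arith_le α β ‖x'‖ ‖y'‖ t ha hb hnx' hny' habs
  · intro heq
    rw [hdecomp] at heq
    have hx'0 : x' = 0 := by
      by_contra h1
      have hn1 : (0:ℝ) < ‖x'‖ := norm_pos_iff.mpr h1
      by_cases h2 : y' = 0
      · -- then t = 0, β² = 1, αβ = 1 ⇒ α² = 1 ⇒ ‖x'‖² = 0 contradiction
        have ht0 : t = 0 := by rw [ht, h2]; simp
        have hb0 : ‖y'‖ = 0 := by simp [h2]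
        have hβ2 : β ^ 2 = 1 := by
          have h0 : (0:ℝ) = 1 - β ^ 2 := by rw [← hny', hb0]; ring
          linarith
        have hαβ1 : α * β = 1 := by linarith
        have hαβeq : α = β := by
          calc α = α * β ^ 2 := by rw [hβ2]; ring
            _ = (α * β) * β := by ring
            _ = β := by rw [hαβ1]; ring
        have hα2 : α ^ 2 = 1 := by rw [hαβeq]; exact hβ2
        have h0 : ‖x'‖ ^ 2 = 0 := by rw [hnx', hα2]; ring
        exact h1 (norm_eq_zero.mp (pow_eq_zero_iff (two_ne_zero) |>.mp h0))
      · have hst := htstrict h1 h2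
        have hn2 : (0:ℝ) < ‖y'‖ := norm_pos_iff.mpr h2
        have ht' : t < ‖x'‖ * ‖y'‖ := lt_of_le_of_lt (le_abs_self t) hst
        exact arith_lt α β ‖x'‖ ‖y'‖ t ha hb hnx' hny' ht' heq
    have hax : ‖x'‖ = 0 := by simp [hx'0]
    have hα2 : α ^ 2 = 1 := by
      have h0 : (0:ℝ) = 1 - α ^ 2 := by rw [← hnx', hax]; ring
      linarith
    have ht0 : t = 0 := by rw [ht, hx'0]; simp
    have hαβ : α * β = 1 := by linarith [heq, ht0]
    have hβα : β = α := by
      calc β = α ^ 2 * β := by rw [hα2]; ring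
        _ = α * (α * β) := by ring
        _ = α := by rw [hαβ]; ring
    have hy'0 : y' = 0 := by
      have hβ2 : β ^ 2 = 1 := by rw [hβα]; exact hα2
      have h0 : ‖y'‖ ^ 2 = 0 := by rw [hny', hβ2]; ring
      exact norm_eq_zero.mp (pow_eq_zero_iff (two_ne_zero) |>.mp h0)
    refine ⟨α, by rw [show α * α = α ^ 2 by ring]; exact hα2, ?_, ?_⟩
    · rw [hx'] at hx'0
      rw [sub_eq_zero.mp hx'0]
    · rw [hy'] at hy'0
      rw [sub_eq_zero.mp hy'0, hβα]

theorem stmt2 {H1 H2 ι : Type*}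
    [NormedAddCommGroup H1] [InnerProductSpace ℝ H1] [CompleteSpace H1]
    [TopologicalSpace.SeparableSpace H1]
    [NormedAddCommGroup H2] [InnerProductSpace ℝ H2] [CompleteSpace H2]
    [TopologicalSpace.SeparableSpace H2]
    (u : H1) (v : H2) (hu : ‖u‖ = 1) (hv : ‖v‖ = 1)
    -- `H` is a Hilbert–Schmidt operator:
    (H : H1 →L[ℝ] H2) (b : HilbertBasis ι ℝ H1)
    (hHS : Summable fun i => ‖H (b i)‖ ^ 2)
    (hHu : H u = v) (hHv : ContinuousLinearMap.adjoint H v = u)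
    (hperp : ∀ (u' : H1) (v' : H2), ‖u'‖ = 1 → ‖v'‖ = 1 →
      ⟪u, u'⟫ = 0 → ⟪v, v'⟫ = 0 → |⟪H u', v'⟫| < 1)
    -- `G` is a trace-class operator with singular value decomposition `Σ σ k • φ k ⊗ ψ k`:
    (G : H1 →L[ℝ] H2) (σ : ℕ → ℝ) (φ : ℕ → H1) (ψ : ℕ → H2)
    (hσ : ∀ k, 0 ≤ σ k) (hσsum : Summable σ)
    (hφ : Orthonormal ℝ φ) (hψ : Orthonormal ℝ ψ)
    (hG : ∀ a, G a = ∑' k, (σ k * ⟪φ k, a⟫) • ψ k)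
    -- `⟨H, G⟩_{HS} = ‖G‖_*`:
    (hopt : ∑' k, σ k * ⟪H (φ k), ψ k⟫ = ∑' k, σ k) :
    ∃ c : ℝ, 0 ≤ c ∧ G = c • rankOne u v := by
  have rankOne_apply : ∀ a, rankOne u v a = ⟪u, a⟫ • v := fun a => rfl
  have hφn : ∀ k, ‖φ k‖ = 1 := hφ.1
  have hψn : ∀ k, ‖ψ k‖ = 1 := hψ.1
  have hkey := fun k => key_ineq u v hu hv H hHu hHv hperp (φ k) (ψ k) (hφn k) (hψn k)
  -- summability of the cross terms
  have hgsum : Summable (fun k => σ k * ⟪H (φ k), ψ k⟫) := by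
    apply Summable.of_norm_bounded (hσsum.mul_left ‖H‖)
    intro k
    rw [Real.norm_eq_abs, abs_mul, abs_of_nonneg (hσ k)]
    have h1 : |⟪H (φ k), ψ k⟫| ≤ ‖H (φ k)‖ * ‖ψ k‖ := abs_real_inner_le_norm _ _
    have h2 : ‖H (φ k)‖ ≤ ‖H‖ := by
      calc ‖H (φ k)‖ ≤ ‖H‖ * ‖φ k‖ := H.le_opNorm _
        _ = ‖H‖ := by rw [hφn k, mul_one]
    calc σ k * |⟪H (φ k), ψ k⟫| ≤ σ k * ‖H‖ := by
          apply mul_le_mul_of_nonneg_left _ (hσ k)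
          rw [hψn k, mul_one] at h1
          exact le_trans h1 h2
      _ = ‖H‖ * σ k := mul_comm _ _
  -- each term must be saturated
  have hzero : ∀ k, σ k = 0 ∨ ⟪H (φ k), ψ k⟫ = 1 := by
    have hf : Summable (fun k => σ k - σ k * ⟪H (φ k), ψ k⟫) := hσsum.sub hgsum
    have hts : ∑' k, (σ k - σ k * ⟪H (φ k), ψ k⟫) = 0 := by
      rw [Summable.tsum_sub hσsum hgsum, hopt, sub_self]
    have hnn : ∀ k, 0 ≤ σ k - σ k * ⟪H (φ k), ψ k⟫ := by
      intro k
      have := (hkey k).1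
      nlinarith [hσ k]
    intro k
    have hle : σ k - σ k * ⟪H (φ k), ψ k⟫ ≤ 0 := hts ▸ Summable.le_tsum hf k (fun j _ => hnn j)
    have heq0 : σ k - σ k * ⟪H (φ k), ψ k⟫ = 0 := le_antisymm hle (hnn k)
    rcases eq_or_ne (σ k) 0 with h | h
    · exact Or.inl h
    · right
      have : σ k * (1 - ⟪H (φ k), ψ k⟫) = 0 := by linarith [heq0]
      rcases mul_eq_zero.mp this with h' | h'
      · exact absurd h' h
      · linarith
  by_cases hall : ∀ k, σ k = 0
  · refine ⟨0, le_refl 0, ?_⟩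
    ext a
    rw [hG a]
    simp [hall]
  · push_neg at hall
    obtain ⟨k0, hk0⟩ := hall
    obtain ⟨ε, hε2, hφk0, hψk0⟩ :=
      (hkey k0).2 ((hzero k0).resolve_left hk0)
    have hεne : ε ≠ 0 := by
      intro h; rw [h] at hε2; norm_num at hε2
    -- all other singular values vanish
    have huniq : ∀ k, k ≠ k0 → σ k = 0 := by
      intro k hk
      by_contra h
      obtain ⟨ε', hε'2, hφk, _⟩ := (hkey k).2 ((hzero k).resolve_left h)
      have : ⟪φ k, φ k0⟫ = 0 := hφ.2 hk
      rw [hφk, hφk0, real_inner_smul_left, real_inner_smul_right,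
        real_inner_self_eq_norm_sq, hu] at this
      have hε'ne : ε' ≠ 0 := by
        intro h'; rw [h'] at hε'2; norm_num at hε'2
      simp only [one_pow, mul_one] at this
      exact hεne (by
        rcases mul_eq_zero.mp this with h' | h'
        · exact absurd h' hε'ne
        · exact h')
    refine ⟨σ k0, hσ k0, ?_⟩
    ext a
    rw [hG a, ContinuousLinearMap.smul_apply, rankOne_apply]
    rw [tsum_eq_single k0 (fun k hk => by rw [huniq k hk]; simp)]
    rw [hφk0, hψk0, real_inner_smul_left]
    rw [smul_smul, smul_smul]
    congr 1
    ring_nf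
    rw [show σ k0 * ε ^ 2 * ⟪u, a⟫ = σ k0 * (ε * ε) * ⟪u, a⟫ by ring, hε2, mul_one]
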